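/- arXiv:2408.12444 — 5 statements merged into one kernel-verified Lean document; each statement's English description precedes it below -/
import Mathlib

section
/- Let p be a prime, ι a finite type with 2 ≤ |ι|, x : ι → F_p injective, m ∈ F_p, and for each i ∈ ι let w(i) ∈ F_p with w(i) ≠ 0 and z(i) ∈ F_p. Define the encrypted y-coordinates o(i) := w(i) · ((x(i) + m) + z(i)). Then the Lagrange interpolant through the points (x(i), w(i)⁻¹ · o(i) − z(i)) equals the polynomial X + m in F_p[X]; in particular, its constant coefficient equals m. -/
open Polynomial

theorem stmt_1 {p : ℕ} [Fact p.Prime] {ι : Type} [Fintype ι] [DecidableEq ι]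
    (hcard : 2 ≤ Fintype.card ι) (x : ι → ZMod p) (hx : Function.Injective x)
    (m : ZMod p) (w z : ι → ZMod p) (hw : ∀ i, w i ≠ 0)
    (o : ι → ZMod p) (ho : ∀ i, o i = w i * ((x i + m) + z i)) :
    Lagrange.interpolate Finset.univ x (fun i => (w i)⁻¹ * o i - z i) = X + C m ∧
    (Lagrange.interpolate Finset.univ x (fun i => (w i)⁻¹ * o i - z i)).coeff 0 = m := by
  have hfun : (fun i => (w i)⁻¹ * o i - z i) = fun i => eval (x i) (X + C m) := by
    funext i
    rw [ho i, inv_mul_cancel_left₀ (hw i)]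
    simp [add_sub_cancel_right]
  have hdeg : (X + C m : (ZMod p)[X]).degree < (Finset.univ : Finset ι).card := by
    rw [degree_X_add_C, Finset.card_univ]
    exact_mod_cast Nat.lt_of_lt_of_le one_lt_two hcard
  have h := (Lagrange.eq_interpolate (f := X + C m) (hx.injOn) hdeg).symm
  rw [hfun]
  exact ⟨h, by rw [h]; simp⟩
end

section
/- Let p be a prime, ι a finite type with 3 ≤ |ι|, x : ι → F_p injective, root ∈ F_p, z a natural number, and q, m : Fin z → F_p. For each i ∈ ι let w'(i) ∈ F_p with w'(i) ≠ 0 and z'(i) ∈ F_p, and define g(i) := w'(i) · ((x(i) − root) · ∑_{j} q(j)·(x(i) + m(j))) + z'(i). Then the Lagrange interpolant through the points (x(i), w'(i)⁻¹ · (g(i) − z'(i))) equals the polynomial θ(X) = (X − root) · ∑_{j} C(q(j)) · (X + C(m(j))) in F_p[X]. -/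
open Polynomial

theorem stmt_3 {p : ℕ} [Fact p.Prime] {ι : Type} [Fintype ι] [DecidableEq ι]
    (hcard : 3 ≤ Fintype.card ι) (x : ι → ZMod p) (hx : Function.Injective x)
    (root : ZMod p) (z : ℕ) (q m : Fin z → ZMod p)
    (w' z' : ι → ZMod p) (hw' : ∀ i, w' i ≠ 0)
    (g : ι → ZMod p)
    (hg : ∀ i, g i = w' i * ((x i - root) * ∑ j, q j * (x i + m j)) + z' i) :
    Lagrange.interpolate Finset.univ x (fun i => (w' i)⁻¹ * (g i - z' i)) =
      (X - C root) * ∑ j, C (q j) * (X + C (m j)) := by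
  symm
  apply Lagrange.eq_interpolate_of_eval_eq
  · exact fun a _ b _ h => hx h
  · have h1 : ((X : (ZMod p)[X]) - C root).degree ≤ 1 := by
      simpa using degree_sub_le (X : (ZMod p)[X]) (C root)
    have h2 : (∑ j, C (q j) * (X + C (m j)) : (ZMod p)[X]).degree ≤ 1 := by
      refine le_trans (degree_sum_le _ _) (Finset.sup_le fun j _ => ?_)
      calc (C (q j) * (X + C (m j))).degree ≤ (C (q j)).degree + (X + C (m j)).degree :=
            degree_mul_le _ _
        _ ≤ 0 + 1 := add_le_add degree_C_le
            (by simpa using degree_add_le (X : (ZMod p)[X]) (C (m j)))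
        _ = 1 := by norm_num
    calc ((X - C root) * ∑ j, C (q j) * (X + C (m j)) : (ZMod p)[X]).degree ≤ 1 + 1 :=
          le_trans (degree_mul_le _ _) (add_le_add h1 h2)
      _ < (Finset.univ : Finset ι).card := by
          rw [Finset.card_univ]
          calc (1 : WithBot ℕ) + 1 = 2 := by norm_num
            _ < 3 := by norm_num
            _ ≤ (Fintype.card ι : WithBot ℕ) := by exact_mod_cast hcard
  · intro i _
    have hval : (w' i)⁻¹ * (g i - z' i) = (x i - root) * ∑ j, q j * (x i + m j) := by
      rw [hg i, add_sub_cancel_right, inv_mul_cancel_left₀ (hw' i)]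
    rw [hval, eval_mul, eval_sub, eval_X, eval_C, eval_finset_sum]
    simp
end

section
/- Let p be a prime, C a finite type, and I a finite subset of C. For each u ∈ I let γ(u), w'(u), z'(u) ∈ F_p; for each u ∈ C let q(u), π(u), zb(u) ∈ F_p and w(u) ∈ F_p with w(u) ≠ 0; let a : C → C → F_p and define y(u) := (if u ∈ I then −∑_{l ∈ univ \ {u}} a(u, l) else 0) + ∑_{l ∈ I \ {u}} a(l, u). Set P := ∏_{l ∈ I} γ(l)·w'(l), and for each u ∈ C let d(u) := (q(u)·P·w(u)⁻¹) · (w(u)·(π(u) + zb(u))) + (−(q(u)·P·zb(u)) + (if u ∈ I then z'(u) else 0) + y(u)). Then ∑_{u ∈ C} d(u) = P · ∑_{u ∈ C} q(u)·π(u) + ∑_{u ∈ I} z'(u). -/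
theorem stmt_9 {p : ℕ} [Fact p.Prime] {C : Type} [Fintype C] [DecidableEq C]
    (I : Finset C) (γ w' z' : C → ZMod p) (q π zb w : C → ZMod p)
    (hw : ∀ u, w u ≠ 0) (a : C → C → ZMod p)
    (y : C → ZMod p)
    (hy : ∀ u, y u = (if u ∈ I then -∑ l ∈ Finset.univ \ {u}, a u l else 0) +
      ∑ l ∈ I \ {u}, a l u)
    (P : ZMod p) (hP : P = ∏ l ∈ I, γ l * w' l)
    (d : C → ZMod p)
    (hd : ∀ u, d u = (q u * P * (w u)⁻¹) * (w u * (π u + zb u)) +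
      (-(q u * P * zb u) + (if u ∈ I then z' u else 0) + y u)) :
    ∑ u, d u = P * ∑ u, q u * π u + ∑ l ∈ I, z' l := by
  have hA : ∀ u : C, ∑ l ∈ I \ {u}, a l u
      = ∑ l : C, if l ∈ I ∧ l ≠ u then a l u else 0 := by
    intro u
    have hset : I \ {u} = Finset.univ.filter (fun l => l ∈ I ∧ l ≠ u) := by
      ext x; simp [Finset.mem_sdiff]
    rw [hset, Finset.sum_filter]
  have hB : ∀ u : C, (if u ∈ I then -∑ l ∈ Finset.univ \ {u}, a u l else 0)
      = -∑ l : C, if u ∈ I ∧ u ≠ l then a u l else 0 := by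
    intro u
    by_cases hu : u ∈ I
    · have hset : (Finset.univ \ {u} : Finset C)
          = Finset.univ.filter (fun l => u ∈ I ∧ u ≠ l) := by
        ext x; simp [Finset.mem_sdiff, hu, eq_comm]
      simp only [hu, if_true, hset, Finset.sum_filter]
    · simp [hu]
  have hy0 : ∑ u, y u = 0 := by
    simp only [hy, hA, hB, Finset.sum_add_distrib]
    rw [Finset.sum_neg_distrib, neg_add_eq_zero]
    rw [Finset.sum_comm]
  have hd' : ∀ u, d u = q u * P * π u + (if u ∈ I then z' u else 0) + y u := by
    intro u
    rw [hd u]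
    have h1 : (q u * P * (w u)⁻¹) * (w u * (π u + zb u))
        = q u * P * (π u + zb u) := by
      calc (q u * P * (w u)⁻¹) * (w u * (π u + zb u))
          = q u * P * ((w u)⁻¹ * w u) * (π u + zb u) := by ring
        _ = q u * P * (π u + zb u) := by rw [inv_mul_cancel₀ (hw u)]; ring
    rw [h1]; ring
  simp only [hd', Finset.sum_add_distrib, hy0, add_zero]
  rw [Finset.sum_ite_mem, Finset.univ_inter, Finset.mul_sum]
  congr 1
  exact Finset.sum_congr rfl (fun u _ => by ring)
end

section
/- Let p be a prime, t a natural number, ι a finite type with t + 2 ≤ |ι|, x : ι → F_p injective, r : Fin t → F_p, n a natural number, and q, m : Fin n → F_p. For each i ∈ ι and k ∈ Fin t let w'(i, k) ∈ F_p with w'(i, k) ≠ 0 and z'(i, k) ∈ F_p, and define g(i) := (∏_{k} (x(i) − r(k)) · w'(i, k)) · (∑_{u} q(u)·(x(i) + m(u))) + ∑_{k} z'(i, k). Then the Lagrange interpolant through the points (x(i), (∏_{k} w'(i, k))⁻¹ · (g(i) − ∑_{k} z'(i, k))) equals the polynomial Θ(X) = (∏_{k} (X − C(r(k)))) · (∑_{u}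 C(q(u)) · (X + C(m(u)))) in F_p[X]. -/
open Polynomial

theorem stmt_11 {p : ℕ} [Fact p.Prime] (t : ℕ) {ι : Type} [Fintype ι] [DecidableEq ι]
    (hcard : t + 2 ≤ Fintype.card ι) (x : ι → ZMod p) (hx : Function.Injective x)
    (r : Fin t → ZMod p) (n : ℕ) (q m : Fin n → ZMod p)
    (w' z' : ι → Fin t → ZMod p) (hw' : ∀ i k, w' i k ≠ 0)
    (g : ι → ZMod p)
    (hg : ∀ i, g i = (∏ k, (x i - r k) * w' i k) * (∑ u, q u * (x i + m u)) +
      ∑ k, z' i k) :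
    Lagrange.interpolate Finset.univ x
        (fun i => (∏ k, w' i k)⁻¹ * (g i - ∑ k, z' i k)) =
      (∏ k, (X - C (r k))) * ∑ u, C (q u) * (X + C (m u)) := by
  symm
  apply Lagrange.eq_interpolate_of_eval_eq _ (Set.injOn_of_injective hx)
  · rw [Finset.card_univ]
    have hlt : ((t + 1 : ℕ) : WithBot ℕ) < (Fintype.card ι : WithBot ℕ) :=
      Nat.cast_lt.2 (Nat.lt_of_lt_of_le (Nat.lt_succ_self (t+1)) hcard)
    refine lt_of_le_of_lt ?_ hlt
    refine le_trans (degree_mul_le _ _) ?_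
    have h1 : (∏ k, (X - C (r k)) : (ZMod p)[X]).degree ≤ t := by
      refine le_trans (degree_prod_le _ _) ?_
      calc (∑ _k : Fin t, (X - C (r _k) : (ZMod p)[X]).degree)
          ≤ ∑ _k : Fin t, (1 : WithBot ℕ) :=
            Finset.sum_le_sum fun k _ => degree_X_sub_C_le _
        _ = t := by simp [Finset.sum_const]
    have h2 : (∑ u, C (q u) * (X + C (m u)) : (ZMod p)[X]).degree ≤ 1 := by
      refine le_trans (degree_sum_le _ _) ?_
      refine Finset.sup_le fun u _ => ?_
      refine le_trans (degree_mul_le _ _) ?_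
      calc (C (q u)).degree + (X + C (m u) : (ZMod p)[X]).degree
          ≤ 0 + 1 := add_le_add degree_C_le (le_of_eq (degree_X_add_C _))
        _ = 1 := by norm_num
    calc (∏ k, (X - C (r k)) : (ZMod p)[X]).degree +
          (∑ u, C (q u) * (X + C (m u)) : (ZMod p)[X]).degree
        ≤ (t : WithBot ℕ) + 1 := add_le_add h1 h2
      _ = ((t + 1 : ℕ) : WithBot ℕ) := by push_cast; ring
  · intro i _
    have hprod : (∏ k, w' i k) ≠ 0 := Finset.prod_ne_zero_iff.2 fun k _ => hw' i k
    rw [hg i]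
    simp only [add_sub_cancel_right]
    rw [Finset.prod_mul_distrib]
    field_simp
    simp [eval_prod, eval_finset_sum]
end

section
/- Let p be a prime, C a finite type, I a finite subset of C with |I| ≥ 1, ι a finite type with |I| + 2 ≤ |ι|, and x : ι → F_p injective. For each u ∈ C let m(u), q(u) ∈ F_p; for each i ∈ ι and u ∈ C let w(i, u) ∈ F_p with w(i, u) ≠ 0 and zb(i, u) ∈ F_p, and define the outsourced puzzle coordinates o(i, u) := w(i, u)·((x(i) + m(u)) + zb(i, u)). For each leader l ∈ I let root(l) ∈ F_p, and for each i ∈ ι let w'(i, l) ∈ F_p with w'(i, l) ≠ 0 and z'(i, l) ∈ F_p. Let a : C → C → F_p and define y(u) := (if u ∈ I then −∑_{l ∈ univ \ {u}} a(u, l) else 0) + ∑_{l ∈ I \ {u}} a(l, u). Set P(i) := ∏_{l ∈ I} (x(i) − root(l))·w'(i, l), d(i, u) := (q(u)·P(i)·w(i, u)⁻¹)·o(i, u) + (−(q(u)·P(i)·zb(i, u)) + (if u ∈ I then z'(i, u) else 0) + y(u)), and g(i) := ∑_{u ∈ C} d(i, u). Then the Lagrange interpolant through the points (x(i), (∏_{l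 ∈ I} w'(i, l))⁻¹·(g(i) − ∑_{l ∈ I} z'(i, l))) equals Θ(X) := (∏_{l ∈ I} (X − C(root(l)))) · (∑_{u ∈ C} C(q(u))·(X + C(m(u)))); and if moreover root(l) ≠ 0 for every l ∈ I, then (coeff 0 of Θ) · (∏_{l ∈ I} (−root(l)))⁻¹ = ∑_{u ∈ C} q(u)·m(u). -/
open Polynomial

theorem stmt_16 {p : ℕ} [Fact p.Prime] {C : Type} [Fintype C] [DecidableEq C]
    (I : Finset C) (hI : 1 ≤ I.card)
    {ι : Type} [Fintype ι] [DecidableEq ι] (hcard : I.card + 2 ≤ Fintype.card ι)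
    (x : ι → ZMod p) (hx : Function.Injective x)
    (m q : C → ZMod p)
    (w : ι → C → ZMod p) (hw : ∀ i u, w i u ≠ 0) (zb : ι → C → ZMod p)
    (root : C → ZMod p)
    (w' : ι → C → ZMod p) (hw' : ∀ i l, w' i l ≠ 0) (z' : ι → C → ZMod p)
    (a : C → C → ZMod p)
    (y : C → ZMod p)
    (hy : ∀ u, y u = (if u ∈ I then -∑ l ∈ Finset.univ \ {u}, a u l else 0) +
      ∑ l ∈ I \ {u}, a l u)
    (o : ι → C → ZMod p) (ho : ∀ i u, o i u = w i u * ((x i + m u) + zb i u))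
    (P : ι → ZMod p) (hP : ∀ i, P i = ∏ l ∈ I, (x i - root l) * w' i l)
    (d : ι → C → ZMod p)
    (hd : ∀ i u, d i u = (q u * P i * (w i u)⁻¹) * o i u +
      (-(q u * P i * zb i u) + (if u ∈ I then z' i u else 0) + y u))
    (g : ι → ZMod p) (hg : ∀ i, g i = ∑ u, d i u)
    (Θ : (ZMod p)[X])
    (hΘ : Θ = (∏ l ∈ I, (X - Polynomial.C (root l))) *
      ∑ u, Polynomial.C (q u) * (X + Polynomial.C (m u))) :
    Lagrange.interpolate Finset.univ x
        (fun i => (∏ l ∈ I, w' i l)⁻¹ * (g i - ∑ l ∈ I, z' i l)) = Θ ∧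
    ((∀ l ∈ I, root l ≠ 0) →
      Θ.coeff 0 * (∏ l ∈ I, -root l)⁻¹ = ∑ u, q u * m u) := by
  -- the masks sum to zero
  have hysum : ∑ u, y u = 0 := by
    have hswap : ∑ u : C, ∑ l ∈ I \ {u}, a l u
        = ∑ l ∈ I, ∑ u ∈ Finset.univ \ {l}, a l u := by
      rw [Finset.sum_comm' (t' := I) (s' := fun l => Finset.univ \ {l})]
      intro u l
      simp only [Finset.mem_sdiff, Finset.mem_univ, Finset.mem_singleton, true_and]
      aesop
    simp only [hy, Finset.sum_add_distrib, hswap]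
    rw [Finset.sum_ite_mem, Finset.univ_inter, Finset.sum_neg_distrib, neg_add_cancel]
  -- simplified form of g
  have hgi : ∀ i, g i = P i * (∑ u, q u * (x i + m u)) + ∑ l ∈ I, z' i l := by
    intro i
    have hdu : ∀ u, d i u = q u * P i * (x i + m u)
        + (if u ∈ I then z' i u else 0) + y u := by
      intro u
      rw [hd, ho]
      field_simp [hw i u]
      ring
    rw [hg]
    simp only [hdu]
    rw [Finset.sum_add_distrib, Finset.sum_add_distrib, hysum, add_zero,
      Finset.sum_ite_mem, Finset.univ_inter, Finset.mul_sum]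
    congr 1
    exact Finset.sum_congr rfl fun u _ => by ring
  -- the node values equal the evaluations of Θ
  have hval : ∀ i : ι, (∏ l ∈ I, w' i l)⁻¹ * (g i - ∑ l ∈ I, z' i l)
      = Θ.eval (x i) := by
    intro i
    have hwp : (∏ l ∈ I, w' i l) ≠ 0 := Finset.prod_ne_zero_iff.2 fun l _ => hw' i l
    rw [hgi, hP, Finset.prod_mul_distrib, hΘ]
    simp only [eval_mul, eval_prod, eval_sub, eval_X, eval_C, eval_finset_sum,
      eval_add]
    field_simp
    ring
  -- degree bound
  have hdeg : Θ.degree < (Finset.univ : Finset ι).card := by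
    have h1 : (∏ l ∈ I, (X - Polynomial.C (root l)) : (ZMod p)[X]).degree
        = (I.card : ℕ) := by
      rw [Polynomial.degree_prod]
      simp [Polynomial.degree_X_sub_C]
    have h2 : (∑ u, Polynomial.C (q u) * (X + Polynomial.C (m u)) : (ZMod p)[X]).degree
        ≤ 1 := by
      refine (Polynomial.degree_sum_le _ _).trans ?_
      refine Finset.sup_le fun u _ => ?_
      refine (Polynomial.degree_mul_le _ _).trans ?_
      calc (Polynomial.C (q u)).degree + (X + Polynomial.C (m u)).degree
          ≤ 0 + 1 := add_le_add Polynomial.degree_C_le (by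
            rw [Polynomial.degree_X_add_C])
        _ = 1 := by norm_num
    have h3 : Θ.degree ≤ (I.card : ℕ) + 1 := by
      rw [hΘ]
      refine (Polynomial.degree_mul_le _ _).trans ?_
      rw [h1]
      exact add_le_add le_rfl h2
    refine lt_of_le_of_lt h3 ?_
    rw [Finset.card_univ]
    have : I.card + 1 < Fintype.card ι := by omega
    exact_mod_cast Nat.cast_lt.mpr this
  constructor
  · symm
    exact Lagrange.eq_interpolate_of_eval_eq _ (hx.injOn) hdeg
      (fun i _ => (hval i).symm)
  · intro hroot
    have hΘ0 : Θ.coeff 0 = (∏ l ∈ I, -root l) * ∑ u, q u * m u := by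
      rw [Polynomial.coeff_zero_eq_eval_zero, hΘ]
      simp [eval_prod, eval_finset_sum, zero_add, zero_sub]
    have hne : (∏ l ∈ I, -root l) ≠ 0 :=
      Finset.prod_ne_zero_iff.2 fun l hl => neg_ne_zero.2 (hroot l hl)
    rw [hΘ0, mul_comm (∏ l ∈ I, -root l), mul_inv_cancel_right₀ hne]
end
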